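/- arXiv:2211.16432 — 2 statements merged into one kernel-verified Lean document; each statement's English description precedes it below -/
import Mathlib

section
/- Continuation principle for the transversal game: for any hypergraph H and sets of vertices A ⊆ B, we have τ_g(H; B) ≤ τ_g(H; A) and τ'_g(H; B) ≤ τ'_g(H; A). -/
open scoped Classical

namespace TransversalGame

/-- A move `v` is legal w.r.t. the selected set `S` in the transversal game on a
hypergraph with edge set `E`: `v` lies in some edge disjoint from `S`. -/
def Legal {V : Type*} (E : Finset (Finset V)) (S : Finset V) (v : V) : Prop :=
  ∃ e ∈ E, v ∈ e ∧ ∀ u ∈ S, u ∉ e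

theorem Legal.not_mem {V : Type*} {E : Finset (Finset V)} {S : Finset V} {v : V}
    (h : Legal E S v) : v ∉ S := by
  rcases h with ⟨e, _, hv, hd⟩
  exact fun hvS => hd v hvS hv

/-- Value of the transversal game from position `S`; `b = true` means Edge-hitter
(the minimizer) to move. The game ends when the selected set is a transversal,
equivalently when no legal move exists. -/
noncomputable def val {V : Type*} [Fintype V] (E : Finset (Finset V)) (b : Bool) (S : Finset V) : ℕ :=
  let L := Finset.univ.filter (fun v => Legal E S v)
  if h : L.Nonempty then
    have hL : L.attach.Nonempty := h.attach
    if b then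
      1 + L.attach.inf' hL (fun v => val E false (insert v.1 S))
    else
      1 + L.attach.sup' hL (fun v => val E true (insert v.1 S))
  else 0
termination_by (Finset.univ \ S).card
decreasing_by
  all_goals {
    have hv : Legal E S v.1 := (Finset.mem_filter.mp v.2).2
    have hvS : v.1 ∉ S := hv.not_mem
    apply Finset.card_lt_card
    constructor
    · intro x hx
      simp only [Finset.mem_sdiff] at hx ⊢
      exact ⟨hx.1, fun hmem => hx.2 (Finset.mem_insert_of_mem hmem)⟩
    · intro hsub
      have hvmem : v.1 ∈ Finset.univ \ S := by simp [hvS]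
      have := hsub hvmem
      simp at this
  }

/-- Edge-hitter-start game transversal number starting from `A`. -/
noncomputable def tauG {V : Type*} [Fintype V] (E : Finset (Finset V)) (A : Finset V) : ℕ :=
  val E true A

/-- Staller-start game transversal number starting from `A`. -/
noncomputable def tauG' {V : Type*} [Fintype V] (E : Finset (Finset V)) (A : Finset V) : ℕ :=
  val E false A

end TransversalGame

namespace TransversalGame
variable {V : Type*} [Fintype V]

lemma val_eq (E : Finset (Finset V)) (b : Bool) (S : Finset V) :
    val E b S =
      if h : (Finset.univ.filter (fun v => Legal E S v)).Nonempty then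
        if b then 1 + (Finset.univ.filter (fun v => Legal E S v)).attach.inf' h.attach
            (fun v => val E false (insert v.1 S))
        else 1 + (Finset.univ.filter (fun v => Legal E S v)).attach.sup' h.attach
            (fun v => val E true (insert v.1 S))
      else 0 := by
  rw [val]

omit [Fintype V] in
lemma legal_mono {E : Finset (Finset V)} {A B : Finset V} (hAB : A ⊆ B) {v : V}
    (h : Legal E B v) : Legal E A v := by
  rcases h with ⟨e, he, hv, hd⟩
  exact ⟨e, he, hv, fun u hu => hd u (hAB hu)⟩

lemma filter_mono {E : Finset (Finset V)} {A B : Finset V} (hAB : A ⊆ B) :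
    (Finset.univ.filter (fun v => Legal E B v)) ⊆ (Finset.univ.filter (fun v => Legal E A v)) := by
  intro v hv
  simp only [Finset.mem_filter, Finset.mem_univ, true_and] at hv ⊢
  exact legal_mono hAB hv

lemma card_insert_le {A : Finset V} {v : V} {n : ℕ}
    (hv : v ∉ A) (hn : (Finset.univ \ A).card ≤ n + 1) :
    (Finset.univ \ insert v A).card ≤ n := by
  rw [Finset.sdiff_insert]
  have hmem : v ∈ Finset.univ \ A := by simp [hv]
  have := Finset.card_erase_of_mem hmem
  omega

lemma val_of_empty {E : Finset (Finset V)} {S : Finset V}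
    (h : ¬ (Finset.univ.filter (fun v => Legal E S v)).Nonempty) (b : Bool) :
    val E b S = 0 := by
  rw [val_eq, dif_neg h]

lemma filter_insert_of_not_legal {E : Finset (Finset V)} {B : Finset V} {v : V}
    (hv : ¬ Legal E B v) :
    (Finset.univ.filter (fun u => Legal E (insert v B) u)) =
      (Finset.univ.filter (fun u => Legal E B u)) := by
  ext u
  simp only [Finset.mem_filter, Finset.mem_univ, true_and]
  constructor
  · exact legal_mono (Finset.subset_insert v B)
  · rintro ⟨e, he, hu, hd⟩
    refine ⟨e, he, hu, ?_⟩
    intro x hx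
    rcases Finset.mem_insert.mp hx with rfl | hxB
    · exact fun hxe => hv ⟨e, he, hxe, hd⟩
    · exact hd x hxB

/-- Adding a vertex that is not a legal move does not change the game value. -/
lemma val_insert_of_not_legal (E : Finset (Finset V)) :
    ∀ n (B : Finset V) (v : V), (Finset.univ \ B).card ≤ n → ¬ Legal E B v →
      ∀ b, val E b (insert v B) = val E b B := by
  intro n
  induction n with
  | zero =>
    intro B v hcard hv b
    have hemp : ¬ (Finset.univ.filter (fun u => Legal E B u)).Nonempty := by
      rintro ⟨u, hu⟩
      have hu' : Legal E B u := (Finset.mem_filter.mp hu).2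
      have : u ∈ Finset.univ \ B := by simp [hu'.not_mem]
      have := Finset.card_pos.mpr ⟨u, this⟩
      omega
    have hemp' : ¬ (Finset.univ.filter (fun u => Legal E (insert v B) u)).Nonempty := by
      rw [filter_insert_of_not_legal hv]; exact hemp
    rw [val_of_empty hemp, val_of_empty hemp']
  | succ n ih =>
    intro B v hcard hv b
    rw [val_eq E b (insert v B), val_eq E b B, filter_insert_of_not_legal hv]
    by_cases hne : (Finset.univ.filter (fun u => Legal E B u)).Nonempty
    · rw [dif_pos hne, dif_pos hne]
      have key : ∀ b' : Bool, ∀ u : {x // x ∈ Finset.univ.filter (fun u => Legal E B u)},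
          val E b' (insert u.1 (insert v B)) = val E b' (insert u.1 B) := by
        intro b' u
        have hu : Legal E B u.1 := (Finset.mem_filter.mp u.2).2
        have huB : u.1 ∉ B := hu.not_mem
        have hvu : ¬ Legal E (insert u.1 B) v :=
          fun h => hv (legal_mono (Finset.subset_insert _ _) h)
        rw [Finset.insert_comm]
        exact ih (insert u.1 B) v (card_insert_le huB hcard) hvu b'
      cases b
      · simp only [if_neg, Bool.false_eq_true, if_false]
        congr 1
        exact Finset.sup'_congr _ rfl (fun u _ => key true u)
      · simp only [if_pos]
        congr 1
        exact Finset.inf'_congr _ rfl (fun u _ => key false u)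
    · rw [dif_neg hne, dif_neg hne]

/-- Main mutual induction: continuation principle together with the
"values differ by at most one" facts. -/
lemma main (E : Finset (Finset V)) :
    ∀ n, ∀ A : Finset V, (Finset.univ \ A).card ≤ n →
      ((∀ B, A ⊆ B → ∀ b, val E b B ≤ val E b A) ∧
       val E true A ≤ 1 + val E false A ∧
       val E false A ≤ 1 + val E true A) := by
  intro n
  induction n with
  | zero =>
    intro A hcard
    have hemp : ¬ (Finset.univ.filter (fun u => Legal E A u)).Nonempty := by
      rintro ⟨u, hu⟩
      have hu' : Legal E A u := (Finset.mem_filter.mp hu).2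
      have : u ∈ Finset.univ \ A := by simp [hu'.not_mem]
      have := Finset.card_pos.mpr ⟨u, this⟩
      omega
    refine ⟨fun B hAB b => ?_, ?_, ?_⟩
    · have hempB : ¬ (Finset.univ.filter (fun u => Legal E B u)).Nonempty := by
        intro h
        exact hemp (h.mono (filter_mono hAB))
      rw [val_of_empty hempB, val_of_empty hemp]
    · rw [val_of_empty hemp, val_of_empty hemp]; omega
    · rw [val_of_empty hemp, val_of_empty hemp]; omega
  | succ n ih =>
    intro A hcard
    by_cases hA : (Finset.univ.filter (fun u => Legal E A u)).Nonempty
    · -- helper: measure decreases when inserting a legal vertex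
      have hmeas : ∀ v : V, Legal E A v → (Finset.univ \ insert v A).card ≤ n :=
        fun v hv => card_insert_le hv.not_mem hcard
      -- Continuation principle at this level
      have hcont : ∀ B, A ⊆ B → ∀ b, val E b B ≤ val E b A := by
        intro B hAB b
        cases b
        · -- Staller to move
          rw [val_eq E false B]
          by_cases hB : (Finset.univ.filter (fun u => Legal E B u)).Nonempty
          · rw [dif_pos hB]
            simp only [Bool.false_eq_true, if_false]
            rw [val_eq E false A, dif_pos hA]
            simp only [Bool.false_eq_true, if_false]
            have : ∀ u : {x // x ∈ Finset.univ.filter (fun u => Legal E B u)},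
                val E true (insert u.1 B) ≤
                  (Finset.univ.filter (fun u => Legal E A u)).attach.sup' hA.attach
                    (fun v => val E true (insert v.1 A)) := by
              intro u
              have huB : Legal E B u.1 := (Finset.mem_filter.mp u.2).2
              have huA : Legal E A u.1 := legal_mono hAB huB
              have huAmem : u.1 ∈ Finset.univ.filter (fun v => Legal E A v) := by
                simp [huA]
              have h1 : val E true (insert u.1 B) ≤ val E true (insert u.1 A) :=
                (ih (insert u.1 A) (hmeas u.1 huA)).1 (insert u.1 B)
                  (Finset.insert_subset_insert _ hAB) true
              exact h1.trans (Finset.le_sup' (f := fun v => val E true (insert v.1 A))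
                  (Finset.mem_attach _ ⟨u.1, huAmem⟩))
            exact Nat.add_le_add_left (Finset.sup'_le _ _ (fun u _ => this u)) 1
          · rw [dif_neg hB]
            exact Nat.zero_le _
        · -- Edge-hitter to move
          have hAval : ∃ v : V, ∃ hv : Legal E A v,
              val E true A = 1 + val E false (insert v A) := by
            rw [val_eq E true A, dif_pos hA]
            simp only [if_pos]
            obtain ⟨v, hvmem, hveq⟩ :=
              Finset.exists_mem_eq_inf' hA.attach (fun v :
                  {x // x ∈ Finset.univ.filter (fun u => Legal E A u)} =>
                  val E false (insert v.1 A))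
            exact ⟨v.1, (Finset.mem_filter.mp v.2).2, by rw [hveq]⟩
          obtain ⟨v, hv, hAeq⟩ := hAval
          rw [hAeq]
          have ihv := ih (insert v A) (hmeas v hv)
          by_cases hvB : Legal E B v
          · -- v is still legal from B
            have hBne : (Finset.univ.filter (fun u => Legal E B u)).Nonempty :=
              ⟨v, by simp [hvB]⟩
            have hvBmem : v ∈ Finset.univ.filter (fun u => Legal E B u) := by simp [hvB]
            have h1 : val E true B ≤ 1 + val E false (insert v B) := by
              rw [val_eq E true B, dif_pos hBne]
              simp only [if_pos]
              exact Nat.add_le_add_left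
                (Finset.inf'_le _ (Finset.mem_attach _ ⟨v, hvBmem⟩)) 1
            have h2 : val E false (insert v B) ≤ val E false (insert v A) :=
              ihv.1 (insert v B) (Finset.insert_subset_insert _ hAB) false
            omega
          · -- v is not legal from B: B already "dominates" the move
            have h0 : val E true (insert v B) = val E true B :=
              val_insert_of_not_legal E (Finset.univ \ B).card B v le_rfl hvB true
            have h1 : val E true (insert v B) ≤ val E true (insert v A) :=
              ihv.1 (insert v B) (Finset.insert_subset_insert _ hAB) true
            have h2 : val E true (insert v A) ≤ 1 + val E false (insert v A) :=
              ihv.2.1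
            omega
      refine ⟨hcont, ?_, ?_⟩
      · -- Q1 : val true A ≤ 1 + val false A
        have hA' := hA
        obtain ⟨v0, hv0mem⟩ := hA'
        have hv0 : Legal E A v0 := (Finset.mem_filter.mp hv0mem).2
        rw [val_eq E true A, dif_pos hA, val_eq E false A, dif_pos hA]
        simp only [if_pos, Bool.false_eq_true, if_false]
        have h1 : (Finset.univ.filter (fun u => Legal E A u)).attach.inf' hA.attach
            (fun v => val E false (insert v.1 A)) ≤ val E false (insert v0 A) :=
          Finset.inf'_le _ (Finset.mem_attach _ ⟨v0, hv0mem⟩)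
        have h2 : val E false (insert v0 A) ≤ 1 + val E true (insert v0 A) :=
          (ih (insert v0 A) (hmeas v0 hv0)).2.2
        have h3 : val E true (insert v0 A) ≤
            (Finset.univ.filter (fun u => Legal E A u)).attach.sup' hA.attach
              (fun v => val E true (insert v.1 A)) :=
          Finset.le_sup' (f := fun v => val E true (insert v.1 A))
            (Finset.mem_attach _ ⟨v0, hv0mem⟩)
        omega
      · -- Q2 : val false A ≤ 1 + val true A
        rw [val_eq E false A, dif_pos hA]
        simp only [Bool.false_eq_true, if_false]
        have : ∀ u : {x // x ∈ Finset.univ.filter (fun u => Legal E A u)},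
            val E true (insert u.1 A) ≤ val E true A :=
          fun u => hcont (insert u.1 A) (Finset.subset_insert _ _) true
        have := Finset.sup'_le hA.attach _ (fun u _ => this u)
        omega
    · -- no legal move from A
      refine ⟨fun B hAB b => ?_, ?_, ?_⟩
      · have hempB : ¬ (Finset.univ.filter (fun u => Legal E B u)).Nonempty := by
          intro h
          exact hA (h.mono (filter_mono hAB))
        rw [val_of_empty hempB, val_of_empty hA]
      · rw [val_of_empty hA, val_of_empty hA]; omega
      · rw [val_of_empty hA, val_of_empty hA]; omega

end TransversalGame

/-- Continuation principle for the transversal game: enlarging the preselected set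
can only decrease both game transversal numbers. -/
theorem transversal_continuation_principle {V : Type*} [Fintype V]
    (E : Finset (Finset V)) (A B : Finset V) (hAB : A ⊆ B) :
    TransversalGame.tauG E B ≤ TransversalGame.tauG E A ∧
    TransversalGame.tauG' E B ≤ TransversalGame.tauG' E A := by
  have h := (TransversalGame.main E (Finset.univ \ A).card A le_rfl).1 B hAB
  exact ⟨h true, h false⟩
end

section
/- Let 𝒞 be a class of hypergraphs closed under taking disjoint unions of finitely many copies of any of its members, and suppose there is a constant c > 0 such that τ_g(H) ≤ (c + o(1))·n for every H ∈ 𝒞 on n vertices (i.e., for every ε > 0 there is N such that τ_g(H) ≤ (c+ε)n for all H ∈ 𝒞 with n ≥ N vertices). Then τ_g(H) ≤ c·n + 1 for every H ∈ 𝒞 on n vertices. -/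
open scoped Classical

namespace TransversalGame

section Auxiliary

variable {V : Type*} [Fintype V] {E : Finset (Finset V)} {S : Finset V} {v : V}

lemma val_eq_zero (h : ¬ ∃ v, Legal E S v) (b : Bool) : val E b S = 0 := by
  rw [val]
  have : ¬ (Finset.univ.filter (fun v => Legal E S v)).Nonempty := by
    simp only [Finset.filter_nonempty_iff]
    push_neg at h ⊢
    exact fun v _ => h v
  simp only [this, dif_neg, not_false_iff]

lemma val_true_le (hv : Legal E S v) : val E true S ≤ 1 + val E false (insert v S) := by
  rw [val]
  have hmem : v ∈ Finset.univ.filter (fun v => Legal E S v) := by simp [hv]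
  have hne : (Finset.univ.filter (fun v => Legal E S v)).Nonempty := ⟨v, hmem⟩
  simp only [hne, dif_pos, if_pos]
  exact Nat.add_le_add_left (Finset.inf'_le
    (fun w : {x // x ∈ Finset.univ.filter (fun v => Legal E S v)} => val E false (insert w.1 S))
    (Finset.mem_attach _ ⟨v, hmem⟩)) 1

lemma le_val_false (hv : Legal E S v) : 1 + val E true (insert v S) ≤ val E false S := by
  conv_rhs => rw [val]
  have hmem : v ∈ Finset.univ.filter (fun v => Legal E S v) := by simp [hv]
  have hne : (Finset.univ.filter (fun v => Legal E S v)).Nonempty := ⟨v, hmem⟩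
  simp only [hne, dif_pos, Bool.false_eq_true, if_false]
  exact Nat.add_le_add_left (Finset.le_sup'
    (fun w : {x // x ∈ Finset.univ.filter (fun v => Legal E S v)} => val E true (insert w.1 S))
    (Finset.mem_attach _ ⟨v, hmem⟩)) 1

lemma exists_val_true (h : ∃ v, Legal E S v) :
    ∃ v, Legal E S v ∧ val E true S = 1 + val E false (insert v S) := by
  obtain ⟨v, hv⟩ := h
  have hmem : v ∈ Finset.univ.filter (fun v => Legal E S v) := by simp [hv]
  have hne : (Finset.univ.filter (fun v => Legal E S v)).Nonempty := ⟨v, hmem⟩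
  obtain ⟨w, hw, heq⟩ := Finset.exists_mem_eq_inf' hne.attach
    (fun w : {x // x ∈ Finset.univ.filter (fun v => Legal E S v)} => val E false (insert w.1 S))
  refine ⟨w.1, (Finset.mem_filter.mp w.2).2, ?_⟩
  rw [val]
  simp only [hne, dif_pos, if_pos]
  rw [heq]

lemma exists_val_false (h : ∃ v, Legal E S v) :
    ∃ v, Legal E S v ∧ val E false S = 1 + val E true (insert v S) := by
  obtain ⟨v, hv⟩ := h
  have hmem : v ∈ Finset.univ.filter (fun v => Legal E S v) := by simp [hv]
  have hne : (Finset.univ.filter (fun v => Legal E S v)).Nonempty := ⟨v, hmem⟩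
  obtain ⟨w, hw, heq⟩ := Finset.exists_mem_eq_sup' hne.attach
    (fun w : {x // x ∈ Finset.univ.filter (fun v => Legal E S v)} => val E true (insert w.1 S))
  refine ⟨w.1, (Finset.mem_filter.mp w.2).2, ?_⟩
  conv_lhs => rw [val]
  simp only [hne, dif_pos, Bool.false_eq_true, if_false]
  rw [heq]

lemma one_le_val (h : ∃ v, Legal E S v) (b : Bool) : 1 ≤ val E b S := by
  cases b
  · obtain ⟨v, hv⟩ := h
    calc 1 ≤ 1 + val E true (insert v S) := Nat.le_add_right 1 _
    _ ≤ val E false S := le_val_false hv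
  · obtain ⟨v, hv, heq⟩ := exists_val_true h
    omega

lemma val_pos_iff (b : Bool) : 0 < val E b S ↔ ∃ v, Legal E S v := by
  constructor
  · intro hpos
    by_contra h
    rw [val_eq_zero h] at hpos
    omega
  · intro h
    exact one_le_val h b


/-- `A(T) ⊆ A(S)`: every edge disjoint from `T` is disjoint from `S`. -/
def AliveLe {V : Type*} (E : Finset (Finset V)) (S T : Finset V) : Prop :=
  ∀ e ∈ E, (∀ u ∈ T, u ∉ e) → ∀ u ∈ S, u ∉ e

variable {V : Type*} [Fintype V] {E : Finset (Finset V)} {S T : Finset V} {v w : V}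

lemma AliveLe.rfl : AliveLe E S S := fun _ _ hd => hd

lemma legal_mono_s10 (h : AliveLe E S T) (hv : Legal E T v) : Legal E S v := by
  obtain ⟨e, he, hve, hd⟩ := hv
  exact ⟨e, he, hve, h e he hd⟩

lemma aliveLe_insert_right (h : AliveLe E S T) : AliveLe E S (insert w T) :=
  fun e he hd => h e he (fun u hu => hd u (Finset.mem_insert_of_mem hu))

lemma AliveLe.insert (h : AliveLe E S T) : AliveLe E (insert v S) (insert v T) := by
  intro e he hd u hu
  rcases Finset.mem_insert.mp hu with rfl | hu
  · exact hd u (Finset.mem_insert_self u T)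
  · exact h e he (fun x hx => hd x (Finset.mem_insert_of_mem hx)) u hu

lemma aliveLe_insert_of_not_legal (h : AliveLe E S T) (hw : ¬ Legal E T w) :
    AliveLe E (insert w S) T := by
  intro e he hd u hu
  rcases Finset.mem_insert.mp hu with rfl | hu
  · intro hue
    exact hw ⟨e, he, hue, hd⟩
  · exact h e he hd u hu

lemma card_compl_insert_lt (hv : v ∉ T) :
    (Finset.univ \ insert v T).card < (Finset.univ \ T).card := by
  apply Finset.card_lt_card
  constructor
  · intro x hx
    simp only [Finset.mem_sdiff] at hx ⊢
    exact ⟨hx.1, fun hmem => hx.2 (Finset.mem_insert_of_mem hmem)⟩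
  · intro hsub
    have hvmem : v ∈ Finset.univ \ T := by simp [hv]
    have := hsub hvmem
    simp at this

lemma cross_val : ∀ n : ℕ, ∀ T S : Finset V, (Finset.univ \ T).card ≤ n → AliveLe E S T →
    val E true T ≤ val E true S ∧ val E false T ≤ val E false S ∧
    val E true T ≤ val E false S + 1 ∧ val E false T ≤ val E true S + 1 := by
  intro n
  induction n with
  | zero =>
    intro T S hc _
    have hTleg : ¬ ∃ v, Legal E T v := by
      rintro ⟨v, hv⟩
      have : v ∈ Finset.univ \ T := by simp [hv.not_mem]
      have := Finset.card_pos.mpr ⟨v, this⟩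
      omega
    rw [val_eq_zero hTleg true, val_eq_zero hTleg false]
    omega
  | succ n IH =>
    intro T S hc hAle
    by_cases hTleg : ∃ v, Legal E T v
    case neg =>
      rw [val_eq_zero hTleg true, val_eq_zero hTleg false]
      omega
    case pos =>
    have hSleg : ∃ v, Legal E S v := ⟨hTleg.choose, legal_mono_s10 hAle hTleg.choose_spec⟩
    have hcard : ∀ (T' : Finset V) (w : V), w ∉ T' → (Finset.univ \ T').card ≤ n + 1 →
        (Finset.univ \ insert w T').card ≤ n := by
      intro T' w hw hcT'
      have := card_compl_insert_lt (T := T') (v := w) hw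
      omega
    have hIV : ∀ S' T', (Finset.univ \ T').card ≤ n + 1 → AliveLe E S' T' →
        val E false T' ≤ val E true S' + 1 := by
      intro S' T' hcT' hA
      by_cases hleg : ∃ v, Legal E T' v
      · obtain ⟨v, hv, heq⟩ := exists_val_false hleg
        have h1 : AliveLe E S' (insert v T') := aliveLe_insert_right hA
        have h2 := (IH (insert v T') S' (hcard T' v hv.not_mem hcT') h1).1
        omega
      · rw [val_eq_zero hleg]
        omega
    have hIII : ∀ S', AliveLe E S' T → val E true T ≤ val E false S' + 1 := by
      intro S' hA
      obtain ⟨v, hv, heq⟩ := exists_val_true hTleg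
      have hvS' : Legal E S' v := legal_mono_s10 hA hv
      have h3 := hIV (insert v S') (insert v T)
        (le_trans (le_of_lt (card_compl_insert_lt hv.not_mem)) hc) hA.insert
      have h4 := le_val_false hvS'
      omega
    refine ⟨?_, ?_, hIII S hAle, hIV S T hc hAle⟩
    · -- val true T ≤ val true S
      obtain ⟨w, hwS, heqS⟩ := exists_val_true hSleg
      by_cases hwT : Legal E T w
      · have h5 := val_true_le hwT
        have h6 := (IH (insert w T) (insert w S) (hcard T w hwT.not_mem hc) hAle.insert).2.1
        omega
      · have h7 := hIII (insert w S) (aliveLe_insert_of_not_legal hAle hwT)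
        omega
    · -- val false T ≤ val false S
      obtain ⟨v, hv, heq⟩ := exists_val_false hTleg
      have hvS : Legal E S v := legal_mono_s10 hAle hv
      have h8 := (IH (insert v T) (insert v S) (hcard T v hv.not_mem hc) hAle.insert).1
      have h9 := le_val_false hvS
      omega

lemma val_true_le_val_false_add_one : val E true S ≤ val E false S + 1 :=
  (cross_val (Finset.univ \ S).card S S le_rfl AliveLe.rfl).2.2.1


section Product

variable {V : Type*} [Fintype V]

/-- Edge set of the disjoint union of `m` copies. -/
noncomputable def pE (E : Finset (Finset V)) (m : ℕ) : Finset (Finset (Fin m × V)) :=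
  ((Finset.univ : Finset (Fin m)) ×ˢ E).image (fun p => p.2.image (fun v => (p.1, v)))

/-- The trace of a product position on component `i`. -/
noncomputable def Sc {m : ℕ} (i : Fin m) (T : Finset (Fin m × V)) : Finset V :=
  Finset.univ.filter (fun v => (i, v) ∈ T)

variable {E : Finset (Finset V)} {m : ℕ} {i j : Fin m} {v : V} {T : Finset (Fin m × V)}

lemma mem_Sc : v ∈ Sc i T ↔ (i, v) ∈ T := by simp [Sc]

lemma mem_pE {ee : Finset (Fin m × V)} :
    ee ∈ pE E m ↔ ∃ i : Fin m, ∃ e ∈ E, ee = e.image (fun v => (i, v)) := by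
  constructor
  · intro h
    obtain ⟨p, hp, rfl⟩ := Finset.mem_image.mp h
    exact ⟨p.1, p.2, (Finset.mem_product.mp hp).2, rfl⟩
  · rintro ⟨i, e, he, rfl⟩
    exact Finset.mem_image.mpr ⟨(i, e), Finset.mem_product.mpr ⟨Finset.mem_univ _, he⟩, rfl⟩

lemma legal_pE_iff : Legal (pE E m) T (i, v) ↔ Legal E (Sc i T) v := by
  constructor
  · rintro ⟨ee, hee, hmem, hdisj⟩
    obtain ⟨j, e, he, rfl⟩ := mem_pE.mp hee
    obtain ⟨u, hu, huv⟩ := Finset.mem_image.mp hmem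
    cases huv
    refine ⟨e, he, hu, ?_⟩
    intro u' hu' hue
    exact hdisj (_, u') (mem_Sc.mp hu') (Finset.mem_image_of_mem _ hue)
  · rintro ⟨e, he, hv, hd⟩
    refine ⟨e.image (fun u => (i, u)), mem_pE.mpr ⟨i, e, he, rfl⟩,
      Finset.mem_image_of_mem _ hv, ?_⟩
    rintro ⟨j, u⟩ hp hmem
    obtain ⟨u', hu', heq⟩ := Finset.mem_image.mp hmem
    rw [Prod.mk.injEq] at heq
    obtain ⟨rfl, rfl⟩ := heq
    exact hd _ (mem_Sc.mpr hp) hu'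

@[local instance 2000] noncomputable def prodDecEq {m : ℕ} : DecidableEq (Fin m × V) :=
  fun a b => Classical.propDecidable (a = b)

attribute [reducible] prodDecEq

lemma Sc_insert_self : Sc i (insert (i, v) T) = insert v (Sc i T) := by
  ext u
  simp [Sc, Prod.ext_iff]

lemma Sc_insert_ne (h : j ≠ i) : Sc j (insert (i, v) T) = Sc j T := by
  ext u
  simp only [Sc, Finset.mem_filter, Finset.mem_univ, true_and, Finset.mem_insert, Prod.mk.injEq]
  constructor
  · rintro (⟨rfl, rfl⟩ | hm)
    · exact absurd rfl h
    · exact hm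
  · intro hm; exact Or.inr hm

/-- The set of active components. -/
noncomputable def act (E : Finset (Finset V)) (m : ℕ) (T : Finset (Fin m × V)) : Finset (Fin m) :=
  Finset.univ.filter (fun i => ∃ v, Legal E (Sc i T) v)

lemma mem_act : i ∈ act E m T ↔ ∃ v, Legal E (Sc i T) v := by simp [act]

lemma prod_main : ∀ n : ℕ, ∀ T : Finset (Fin m × V), (Finset.univ \ T).card ≤ n →
    ((act E m T).Nonempty →
      (∑ i, val E true (Sc i T)) + 1 ≤ val (pE E m) true T + (act E m T).card) ∧
    (∀ i : Fin m, val E false (Sc i T) + ∑ l ∈ Finset.univ.erase i, val E true (Sc l T)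
      ≤ val (pE E m) false T + ((act E m T).erase i).card) := by
  intro n
  induction n with
  | zero =>
    intro T hc
    have hempty : ¬ (act E m T).Nonempty := by
      rintro ⟨i, hi⟩
      obtain ⟨v, hv⟩ := mem_act.mp hi
      have hp : Legal (pE E m) T (i, v) := legal_pE_iff.mpr hv
      have : (i, v) ∈ Finset.univ \ T := by simp [hp.not_mem]
      have := Finset.card_pos.mpr ⟨(i, v), this⟩
      omega
    have hnone : ∀ l : Fin m, ¬ ∃ v, Legal E (Sc l T) v := by
      intro l hl
      exact hempty ⟨l, mem_act.mpr hl⟩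
    have hpnone : ¬ ∃ p : Fin m × V, Legal (pE E m) T p := by
      rintro ⟨⟨l, u⟩, hp⟩
      exact hnone l ⟨u, legal_pE_iff.mp hp⟩
    constructor
    · intro h; exact absurd h hempty
    · intro i
      rw [val_eq_zero hpnone false, val_eq_zero (hnone i) false]
      have : ∑ l ∈ Finset.univ.erase i, val E true (Sc l T) = 0 :=
        Finset.sum_eq_zero (fun l _ => val_eq_zero (hnone l) true)
      omega
  | succ n IH =>
    intro T hc
    -- the key step: Staller's bound for an active component
    have hBact : ∀ j : Fin m, j ∈ act E m T →
        val E false (Sc j T) + ∑ l ∈ Finset.univ.erase j, val E true (Sc l T)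
          ≤ val (pE E m) false T + ((act E m T).erase j).card := by
      intro j hj
      obtain ⟨v, hv, heq⟩ := exists_val_false (mem_act.mp hj)
      have hpleg : Legal (pE E m) T (j, v) := legal_pE_iff.mpr hv
      set T' := insert ((j : Fin m), v) T with hT'
      have hVs := le_val_false hpleg
      rw [← hT'] at hVs
      have hcT' : (Finset.univ \ T').card ≤ n := by
        rw [hT']
        have := card_compl_insert_lt (T := T) (v := ((j : Fin m), v)) hpleg.not_mem
        omega
      have hScj : Sc j T' = insert v (Sc j T) := Sc_insert_self
      have hScl : ∀ l, l ≠ j → Sc l T' = Sc l T := fun l hl => Sc_insert_ne hl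
      have hsum : ∑ l ∈ Finset.univ.erase j, val E true (Sc l T') =
          ∑ l ∈ Finset.univ.erase j, val E true (Sc l T) :=
        Finset.sum_congr rfl (fun l hl => by rw [hScl l (Finset.mem_erase.mp hl).1])
      by_cases hact' : (act E m T').Nonempty
      · have hA' := (IH T' hcT').1 hact'
        rw [← Finset.add_sum_erase _ (fun l => val E true (Sc l T')) (Finset.mem_univ j), hScj, hsum] at hA'
        have hsub : act E m T' ⊆ insert j ((act E m T).erase j) := by
          intro l hl
          by_cases hlj : l = j
          · subst hlj; exact Finset.mem_insert_self _ _
          · refine Finset.mem_insert_of_mem (Finset.mem_erase.mpr ⟨hlj, ?_⟩)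
            rw [mem_act] at hl ⊢
            rwa [hScl l hlj] at hl
        have hk' : (act E m T').card ≤ ((act E m T).erase j).card + 1 :=
          le_trans (Finset.card_le_card hsub) (Finset.card_insert_le _ _)
        omega
      · have hall : ∀ l, val E true (Sc l T') = 0 := by
          intro l
          refine val_eq_zero (fun hex => hact' ⟨l, mem_act.mpr hex⟩) true
        have htj' : val E true (insert v (Sc j T)) = 0 := by
          have := hall j; rwa [hScj] at this
        have hS0 : ∑ l ∈ Finset.univ.erase j, val E true (Sc l T) = 0 := by
          rw [← hsum]
          exact Finset.sum_eq_zero (fun l _ => hall l)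
        have hVs1 : 1 ≤ val (pE E m) false T := one_le_val ⟨(j, v), hpleg⟩ false
        omega
    refine ⟨?_, ?_⟩
    · -- Edge-hitter bound
      intro hact
      obtain ⟨i₀, hi₀⟩ := hact
      obtain ⟨v₀, hv₀⟩ := mem_act.mp hi₀
      have hex : ∃ p : Fin m × V, Legal (pE E m) T p := ⟨(i₀, v₀), legal_pE_iff.mpr hv₀⟩
      obtain ⟨⟨i, v⟩, hp, heq⟩ := exists_val_true hex
      have hvi : Legal E (Sc i T) v := legal_pE_iff.mp hp
      have hiact : i ∈ act E m T := mem_act.mpr ⟨v, hvi⟩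
      set T' := insert ((i : Fin m), v) T with hT'
      have hcT' : (Finset.univ \ T').card ≤ n := by
        rw [hT']
        have := card_compl_insert_lt (T := T) (v := ((i : Fin m), v)) hp.not_mem
        omega
      have hB' := (IH T' hcT').2 i
      have hScj : Sc i T' = insert v (Sc i T) := Sc_insert_self
      have hScl : ∀ l, l ≠ i → Sc l T' = Sc l T := fun l hl => Sc_insert_ne hl
      have hsum : ∑ l ∈ Finset.univ.erase i, val E true (Sc l T') =
          ∑ l ∈ Finset.univ.erase i, val E true (Sc l T) :=
        Finset.sum_congr rfl (fun l hl => by rw [hScl l (Finset.mem_erase.mp hl).1])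
      rw [hScj, hsum] at hB'
      have hti := val_true_le hvi
      have hsub : (act E m T').erase i ⊆ (act E m T).erase i := by
        intro l hl
        obtain ⟨hli, hl⟩ := Finset.mem_erase.mp hl
        refine Finset.mem_erase.mpr ⟨hli, ?_⟩
        rw [mem_act] at hl ⊢
        rwa [hScl l hli] at hl
      have hk' := Finset.card_le_card hsub
      have hkact : ((act E m T).erase i).card + 1 = (act E m T).card :=
        Finset.card_erase_add_one hiact
      rw [← Finset.add_sum_erase _ (fun l => val E true (Sc l T)) (Finset.mem_univ i)]
      omega
    · -- Staller bound, all components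
      intro i
      by_cases hi : i ∈ act E m T
      · exact hBact i hi
      · by_cases hact : (act E m T).Nonempty
        · obtain ⟨j, hj⟩ := hact
          have hji : j ≠ i := fun h => hi (h ▸ hj)
          have hB := hBact j hj
          have hti : val E true (Sc i T) = 0 :=
            val_eq_zero (fun hex => hi (mem_act.mpr hex)) true
          have hsi : val E false (Sc i T) = 0 :=
            val_eq_zero (fun hex => hi (mem_act.mpr hex)) false
          have htj := val_true_le_val_false_add_one (E := E) (S := Sc j T)
          have h1 : ∑ l ∈ Finset.univ.erase i, val E true (Sc l T) =
              ∑ l : Fin m, val E true (Sc l T) := Finset.sum_erase _ hti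
          have h2 : val E true (Sc j T) + ∑ l ∈ Finset.univ.erase j, val E true (Sc l T) =
              ∑ l : Fin m, val E true (Sc l T) :=
            Finset.add_sum_erase _ (fun l => val E true (Sc l T)) (Finset.mem_univ j)
          have h3 : ((act E m T).erase i).card = (act E m T).card := by
            rw [Finset.erase_eq_of_notMem hi]
          have h4 : ((act E m T).erase j).card + 1 = (act E m T).card :=
            Finset.card_erase_add_one hj
          omega
        · have hnone : ∀ l : Fin m, ¬ ∃ v, Legal E (Sc l T) v := by
            intro l hl
            exact hact ⟨l, mem_act.mpr hl⟩
          have hpnone : ¬ ∃ p : Fin m × V, Legal (pE E m) T p := by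
            rintro ⟨⟨l, u⟩, hp⟩
            exact hnone l ⟨u, legal_pE_iff.mp hp⟩
          rw [val_eq_zero hpnone false, val_eq_zero (hnone i) false]
          have : ∑ l ∈ Finset.univ.erase i, val E true (Sc l T) = 0 :=
            Finset.sum_eq_zero (fun l _ => val_eq_zero (hnone l) true)
          omega

/-- The copies lower bound: `m·τ_g(H) + 1 ≤ τ_g(mH) + m`. -/
lemma copies_lower (E : Finset (Finset V)) (m : ℕ) (hm : 0 < m)
    (hpos : 0 < val E true (∅ : Finset V)) :
    m * val E true (∅ : Finset V) + 1 ≤ val (pE E m) true (∅ : Finset (Fin m × V)) + m := by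
  have hSc : ∀ i : Fin m, Sc i (∅ : Finset (Fin m × V)) = (∅ : Finset V) := by
    intro i; ext u; simp [Sc]
  have hleg : ∃ v, Legal E (∅ : Finset V) v := (val_pos_iff true).mp hpos
  have hact : act E m (∅ : Finset (Fin m × V)) = Finset.univ := by
    apply Finset.eq_univ_of_forall
    intro i
    rw [mem_act, hSc]
    exact hleg
  have hne : (act E m (∅ : Finset (Fin m × V))).Nonempty := by
    rw [hact]
    exact Finset.univ_nonempty_iff.mpr ⟨⟨0, hm⟩⟩
  have := (prod_main (Finset.univ \ (∅ : Finset (Fin m × V))).card ∅ le_rfl).1 hne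
  rw [hact] at this
  have hsum : ∑ i : Fin m, val E true (Sc i (∅ : Finset (Fin m × V)))
      = m * val E true (∅ : Finset V) := by
    rw [Finset.sum_congr rfl (fun i _ => by rw [hSc i])]
    simp [Finset.card_univ, mul_comm]
  rw [hsum] at this
  simpa [Finset.card_univ] using this

end Product

end Auxiliary

end TransversalGame

/-- A bundled finite hypergraph. -/
structure TGHypergraph where
  V : Type
  [fin : Fintype V]
  E : Finset (Finset V)

attribute [instance] TGHypergraph.fin

/-- The game transversal number of a bundled hypergraph (Edge-hitter starts,
no preselected vertices). -/
noncomputable def TGHypergraph.tau (H : TGHypergraph) : ℕ :=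
  TransversalGame.tauG H.E (∅ : Finset H.V)

/-- The disjoint union of `m` copies of a hypergraph. -/
noncomputable def TGHypergraph.copies (H : TGHypergraph) (m : ℕ) : TGHypergraph where
  V := Fin m × H.V
  E := ((Finset.univ : Finset (Fin m)) ×ˢ H.E).image
        (fun p => p.2.image (fun v => (p.1, v)))

lemma TGHypergraph.copies_tau_lower (H : TGHypergraph) (m : ℕ) (hm : 0 < m) (hpos : 0 < H.tau) :
    m * H.tau + 1 ≤ (H.copies m).tau + m := by
  have hpos' : 0 < TransversalGame.val H.E true (∅ : Finset H.V) := hpos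
  have h := TransversalGame.copies_lower (V := H.V) H.E m hm hpos'
  exact h

lemma TGHypergraph.card_copies (H : TGHypergraph) (m : ℕ) :
    Fintype.card (H.copies m).V = m * Fintype.card H.V := by
  show Fintype.card (Fin m × H.V) = m * Fintype.card H.V
  rw [Fintype.card_prod, Fintype.card_fin]

/-- If a class of hypergraphs is closed under taking disjoint unions of finitely
many copies, and τ_g(H) ≤ (c + o(1))·n holds over the class, then in fact
τ_g(H) ≤ c·n + 1 for every member. -/
theorem tau_le_of_asymptotic_bound (𝒞 : Set TGHypergraph)
    (h_closed : ∀ H ∈ 𝒞, ∀ m : ℕ, 0 < m → H.copies m ∈ 𝒞)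
    (c : ℝ) (hc : 0 < c)
    (h_asymp : ∀ ε : ℝ, 0 < ε → ∃ N : ℕ, ∀ H ∈ 𝒞, N ≤ Fintype.card H.V →
      (H.tau : ℝ) ≤ (c + ε) * Fintype.card H.V) :
    ∀ H ∈ 𝒞, (H.tau : ℝ) ≤ c * Fintype.card H.V + 1 := by
  intro H hH
  by_cases hpos : 0 < H.tau
  case neg =>
    have h0 : H.tau = 0 := by omega
    rw [h0]
    have : (0:ℝ) ≤ c * Fintype.card H.V := by positivity
    push_cast
    linarith
  case pos =>
  have hn : 0 < Fintype.card H.V := by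
    obtain ⟨v, hv⟩ := (TransversalGame.val_pos_iff (E := H.E) (S := (∅ : Finset H.V)) true).mp hpos
    exact Fintype.card_pos_iff.mpr ⟨v⟩
  apply le_of_forall_pos_le_add
  intro δ hδ
  set nn : ℕ := Fintype.card H.V with hnn
  have hnR : (0:ℝ) < nn := by exact_mod_cast hn
  set ε : ℝ := δ / nn with hε
  have hεpos : 0 < ε := by positivity
  obtain ⟨N, hN⟩ := h_asymp ε hεpos
  have hmpos : 0 < N + 1 := Nat.succ_pos N
  have hmem := h_closed H hH (N + 1) hmpos
  have hcard : Fintype.card (H.copies (N + 1)).V = (N + 1) * nn := H.card_copies (N + 1)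
  have hNle : N ≤ Fintype.card (H.copies (N + 1)).V := by
    rw [hcard]
    calc N ≤ N + 1 := Nat.le_succ N
    _ = (N + 1) * 1 := (mul_one _).symm
    _ ≤ (N + 1) * nn := Nat.mul_le_mul_left _ hn
  have hb := hN (H.copies (N + 1)) hmem hNle
  rw [hcard] at hb
  have hlow := H.copies_tau_lower (N + 1) hmpos hpos
  have hlowR : ((N:ℝ) + 1) * H.tau + 1 ≤ ((H.copies (N + 1)).tau : ℝ) + ((N:ℝ) + 1) := by
    exact_mod_cast hlow
  have hbR : ((H.copies (N + 1)).tau : ℝ) ≤ (c + ε) * (((N:ℝ) + 1) * nn) := by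
    push_cast at hb
    linarith
  have hNpos : (0:ℝ) < (N:ℝ) + 1 := by positivity
  have h2 : ((N:ℝ) + 1) * (H.tau:ℝ) ≤ ((N:ℝ) + 1) * ((c + ε) * nn + 1) := by nlinarith
  have ht1 : (H.tau:ℝ) ≤ (c + ε) * nn + 1 := le_of_mul_le_mul_left h2 hNpos
  have hεn : ε * nn = δ := by
    rw [hε]
    field_simp
  calc (H.tau:ℝ) ≤ (c + ε) * nn + 1 := ht1
  _ = c * nn + 1 + ε * nn := by ring
  _ = c * nn + 1 + δ := by rw [hεn]
end
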